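/- For every ℓ > 0, ∫₀^ℓ 1/((ℓ-k)²+1) · 1/(k²+1) dk = 2·(ℓ·arctan(ℓ) + ln(ℓ²+1)) / ((ℓ²+4)·ℓ). -/

import Mathlib

theorem stmt_4 (l : ℝ) (hl : 0 < l) :
    ∫ k in (0:ℝ)..l, 1 / ((l - k) ^ 2 + 1) * (1 / (k ^ 2 + 1)) =
      2 * (l * Real.arctan l + Real.log (l ^ 2 + 1)) / ((l ^ 2 + 4) * l) := by
  set a : ℝ := 2 / (l * (l ^ 2 + 4)) with ha
  set b : ℝ := 1 / (l ^ 2 + 4) with hb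
  have hF : ∀ k : ℝ, HasDerivAt
      (fun x => a / 2 * (Real.log (x ^ 2 + 1) - Real.log ((x - l) ^ 2 + 1))
        + b * (Real.arctan x + Real.arctan (x - l)))
      (1 / ((l - k) ^ 2 + 1) * (1 / (k ^ 2 + 1))) k := by
    intro k
    have h1 : HasDerivAt (fun x : ℝ => x ^ 2 + 1) (2 * k) k := by
      simpa using (hasDerivAt_pow 2 k).add_const 1
    have h2 : HasDerivAt (fun x : ℝ => (x - l) ^ 2 + 1) (2 * (k - l)) k := by
      have := (((hasDerivAt_id k).sub_const l).pow 2).add_const 1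
      simpa using this
    have hp1 : (k : ℝ) ^ 2 + 1 ≠ 0 := by positivity
    have hp2 : (k - l) ^ 2 + 1 ≠ 0 := by positivity
    have hlog1 : HasDerivAt (fun x : ℝ => Real.log (x ^ 2 + 1))
        ((k ^ 2 + 1)⁻¹ * (2 * k)) k := (h1.log hp1).congr_deriv (by ring)
    have hlog2 : HasDerivAt (fun x : ℝ => Real.log ((x - l) ^ 2 + 1))
        (((k - l) ^ 2 + 1)⁻¹ * (2 * (k - l))) k := (h2.log hp2).congr_deriv (by ring)
    have hat1 : HasDerivAt Real.arctan (1 / (1 + k ^ 2)) k := Real.hasDerivAt_arctan k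
    have hat2 : HasDerivAt (fun x : ℝ => Real.arctan (x - l)) (1 / (1 + (k - l) ^ 2)) k := by
      simpa using ((hasDerivAt_id' k).sub_const l).arctan
    have hD := ((hlog1.sub hlog2).const_mul (a / 2)).add ((hat1.add hat2).const_mul b)
    refine hD.congr_deriv ?_
    rw [ha, hb]
    have hq1 : (1 : ℝ) + k ^ 2 ≠ 0 := by positivity
    have hq2 : (1 : ℝ) + (k - l) ^ 2 ≠ 0 := by positivity
    have hp3 : (l - k) ^ 2 + 1 ≠ 0 := by positivity
    have hl4 : l * (l ^ 2 + 4) ≠ 0 := by positivity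
    have hl2 : (l : ℝ) ^ 2 + 4 ≠ 0 := by positivity
    field_simp
    ring
  have hc : Continuous fun k : ℝ => 1 / ((l - k) ^ 2 + 1) * (1 / (k ^ 2 + 1)) := by
    apply Continuous.mul
    · exact continuous_const.div (by continuity) fun x => by positivity
    · exact continuous_const.div (by continuity) fun x => by positivity
  rw [intervalIntegral.integral_eq_sub_of_hasDerivAt (fun k _ => hF k) (hc.intervalIntegrable 0 l)]
  have hll : (l : ℝ) ^ 2 + 4 ≠ 0 := by positivity
  simp only [sub_self, zero_sub, neg_sq, ne_eq, one_pow, Real.log_one, Real.arctan_zero,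
    Real.arctan_neg, zero_pow, OfNat.ofNat_ne_zero, not_false_eq_true, zero_add]
  rw [ha, hb]
  field_simp
  ring
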